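/- Iterated-logarithm bound used in the k-Littlestone lower bound: Let k ≥ 1 and d ≥ 2 be integers, set t = log*(d), assume t ≥ 10, and let m be an integer with 1 ≤ m ≤ t/(16·log(k+1)). Then log*( log_{(m+1)}(d) / 2^{24·(k+1)^{m+1}·m·log m} ) ≥ ⌊t/2⌋. -/
import Mathlib


namespace Stmt19

/-- Iterated base-2 logarithm. -/
noncomputable def logIter : ℕ → ℝ → ℝ
  | 0, x => x
  | (i+1), x => Real.logb 2 (logIter i x)

/-- `log⋆ x = min {t : logIter t x ≤ 1}`. -/
noncomputable def logStar (x : ℝ) : ℕ := sInf {t : ℕ | logIter t x ≤ 1}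

/-- Tower function: `tw 0 = 1`, `tw (n+1) = 2 ^ tw n` (real exponentiation). -/
noncomputable def tw : ℕ → ℝ
  | 0 => 1
  | (n+1) => (2:ℝ) ^ tw n

lemma tw_zero : tw 0 = 1 := rfl

lemma tw_succ (n : ℕ) : tw (n+1) = (2:ℝ) ^ tw n := rfl

lemma one_le_tw : ∀ n, (1:ℝ) ≤ tw n
  | 0 => le_refl 1
  | (n+1) => by
      rw [tw_succ]
      calc (1:ℝ) = (2:ℝ) ^ (0:ℝ) := (Real.rpow_zero 2).symm
      _ ≤ (2:ℝ) ^ tw n :=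
        Real.rpow_le_rpow_of_exponent_le one_le_two
          (le_trans zero_le_one (one_le_tw n))

lemma tw_pos (n : ℕ) : (0:ℝ) < tw n := lt_of_lt_of_le one_pos (one_le_tw n)

/-- Bernoulli-type inequality: `x + 1 ≤ 2 ^ x` for `x ≥ 1`. -/
lemma bern {x : ℝ} (hx : 1 ≤ x) : x + 1 ≤ (2:ℝ) ^ x := by
  have := one_add_mul_self_le_rpow_one_add (s := 1) (by norm_num) hx
  norm_num at this
  linarith

lemma tw_le_succ (n : ℕ) : tw n ≤ tw (n+1) := by
  rw [tw_succ]
  have := bern (one_le_tw n)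
  linarith

lemma tw_mono : Monotone tw := monotone_nat_of_le_succ tw_le_succ

lemma two_le_tw {n : ℕ} (hn : 1 ≤ n) : (2:ℝ) ≤ tw n := by
  calc (2:ℝ) = tw 1 := by rw [tw_succ, tw_zero, Real.rpow_one]
  _ ≤ tw n := tw_mono hn

lemma nat_le_tw : ∀ n : ℕ, (n:ℝ) ≤ tw n
  | 0 => by rw [tw_zero]; norm_num
  | (n+1) => by
      rcases Nat.eq_zero_or_pos n with h | h
      · subst h; rw [tw_succ, tw_zero, Real.rpow_one]; norm_num
      · have h1 : (1:ℝ) ≤ (n:ℝ) := by exact_mod_cast h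
        have := bern h1
        rw [tw_succ]
        push_cast
        calc (n:ℝ) + 1 ≤ (2:ℝ) ^ (n:ℝ) := this
        _ ≤ (2:ℝ) ^ tw n :=
          Real.rpow_le_rpow_of_exponent_le one_le_two (nat_le_tw n)

lemma logIter_add (i j : ℕ) (x : ℝ) :
    logIter (i + j) x = logIter i (logIter j x) := by
  induction i with
  | zero => simp [logIter]
  | succ i ih =>
      have : i + 1 + j = (i + j) + 1 := by omega
      rw [this]
      show Real.logb 2 (logIter (i+j) x) = Real.logb 2 (logIter i (logIter j x))
      rw [ih]

lemma logIter_succ' (i : ℕ) (x : ℝ) :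
    logIter (i + 1) x = logIter i (Real.logb 2 x) := by
  rw [logIter_add i 1 x]
  rfl

/-- If all iterated logs up to `i` are `> 1`, then `x` exceeds the tower. -/
lemma tw_lt_of_logIter (i : ℕ) : ∀ x : ℝ, (∀ j ≤ i, 1 < logIter j x) → tw i < x := by
  induction i with
  | zero => intro x h; exact h 0 (le_refl 0)
  | succ i ih =>
      intro x h
      have hx : (0:ℝ) < x := lt_trans one_pos (h 0 (by omega))
      have hy : ∀ j ≤ i, 1 < logIter j (Real.logb 2 x) := by
        intro j hj
        rw [← logIter_succ']
        exact h (j+1) (by omega)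
      have := ih (Real.logb 2 x) hy
      rw [tw_succ]
      exact (Real.lt_logb_iff_rpow_lt one_lt_two hx).mp this

/-- Forward direction: towers below `x` persist through iterated logs. -/
lemma tw_le_logIter : ∀ (j n : ℕ) (x : ℝ), tw (j + n) ≤ x → tw n ≤ logIter j x := by
  intro j
  induction j with
  | zero => intro n x h; simpa [logIter] using h
  | succ j ih =>
      intro n x h
      rw [logIter_succ']
      apply ih
      have h2 : tw (j + n + 1) ≤ x := by
        have : j + 1 + n = j + n + 1 := by omega
        rwa [this] at h
      rw [tw_succ] at h2
      calc tw (j+n) = Real.logb 2 ((2:ℝ) ^ tw (j+n)) :=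
            (Real.logb_rpow (by norm_num) (by norm_num)).symm
      _ ≤ Real.logb 2 x :=
            Real.logb_le_logb_of_le one_lt_two (Real.rpow_pos_of_pos two_pos _) h2

lemma logb_le_one_of_le_two {x : ℝ} (h0 : 0 < x) (h2 : x ≤ 2) : Real.logb 2 x ≤ 1 := by
  calc Real.logb 2 x ≤ Real.logb 2 2 := Real.logb_le_logb_of_le one_lt_two h0 h2
  _ = 1 := Real.logb_self_eq_one one_lt_two

lemma two_mul_le_rpow {x : ℝ} (hx : 2 ≤ x) : 2 * x ≤ (2:ℝ) ^ x := by
  have h1 : 1 ≤ x - 1 := by linarith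
  have hb := bern h1
  have h2 : (2:ℝ) ^ x = (2:ℝ) ^ (x-1) * (2:ℝ) ^ (1:ℝ) := by
    rw [← Real.rpow_add two_pos]; ring_nf
  rw [Real.rpow_one] at h2
  linarith

lemma logb_le_sub_one {x : ℝ} (hx : 2 ≤ x) : Real.logb 2 x ≤ x - 1 := by
  have h1 : 1 ≤ x - 1 := by linarith
  have hb : x ≤ (2:ℝ) ^ (x - 1) := by have := bern h1; linarith
  calc Real.logb 2 x ≤ Real.logb 2 ((2:ℝ) ^ (x-1)) :=
        Real.logb_le_logb_of_le one_lt_two (by linarith) hb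
  _ = x - 1 := Real.logb_rpow (by norm_num) (by norm_num)

lemma exists_logIter_le_one : ∀ (n : ℕ) (x : ℝ), 1 < x → x ≤ (n:ℝ) + 2 →
    ∃ j, logIter j x ≤ 1 := by
  intro n
  induction n with
  | zero =>
      intro x h1 h2
      refine ⟨1, ?_⟩
      show Real.logb 2 (logIter 0 x) ≤ 1
      have h0 : logIter 0 x = x := rfl
      rw [h0]
      exact logb_le_one_of_le_two (by linarith) (by norm_num at h2; linarith)
  | succ n ih =>
      intro x h1 h2
      by_cases hx2 : x ≤ 2
      · refine ⟨1, ?_⟩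
        show Real.logb 2 (logIter 0 x) ≤ 1
        have h0 : logIter 0 x = x := rfl
        rw [h0]
        exact logb_le_one_of_le_two (by linarith) hx2
      · push_neg at hx2
        have hy1 : 1 < Real.logb 2 x := by
          rw [show (1:ℝ) = Real.logb 2 2 from (Real.logb_self_eq_one one_lt_two).symm]
          exact Real.logb_lt_logb one_lt_two two_pos hx2
        have hy2 : Real.logb 2 x ≤ (n:ℝ) + 2 := by
          have := logb_le_sub_one (le_of_lt hx2)
          push_cast at h2 ⊢
          linarith
        obtain ⟨j, hj⟩ := ih _ hy1 hy2
        exact ⟨j+1, by rw [logIter_succ']; exact hj⟩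

lemma one_lt_logIter_of_lt_logStar {x : ℝ} {j : ℕ} (h : j < logStar x) :
    1 < logIter j x := by
  unfold logStar at h
  have := Nat.notMem_of_lt_sInf h
  simp only [Set.mem_setOf_eq] at this
  exact lt_of_not_ge this

lemma le_logStar {N : ℕ} {x : ℝ} (hx : 1 < x) (h : tw N ≤ x) : N ≤ logStar x := by
  have hne : {t : ℕ | logIter t x ≤ 1}.Nonempty := by
    obtain ⟨j, hj⟩ := exists_logIter_le_one ⌈x⌉₊ x hx
      (by have := Nat.le_ceil x; linarith)
    exact ⟨j, hj⟩
  by_contra hcon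
  push_neg at hcon
  have hmem : logIter (logStar x) x ≤ 1 := Nat.sInf_mem hne
  have h2 : tw 1 ≤ logIter (logStar x) x :=
    tw_le_logIter (logStar x) 1 x
      (le_trans (tw_mono (show logStar x + 1 ≤ N by omega)) h)
  have h3 : (2:ℝ) ≤ logIter (logStar x) x := le_trans (two_le_tw le_rfl) h2
  linarith

/-- Iterated-logarithm bound used in the `k`-Littlestone lower bound. -/
theorem stmt19 (k d : ℕ) (hk : 1 ≤ k) (hd : 2 ≤ d)
    (ht : 10 ≤ logStar (d:ℝ)) (m : ℕ) (hm1 : 1 ≤ m)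
    (hm2 : (m:ℝ) ≤ (logStar (d:ℝ) : ℝ) / (16 * Real.logb 2 ((k:ℝ)+1))) :
    logStar (d:ℝ) / 2 ≤
      logStar (logIter (m+1) (d:ℝ) /
        (2:ℝ) ^ (24*((k:ℝ)+1)^(m+1)*(m:ℝ)*Real.logb 2 (m:ℝ))) := by
  set t := logStar (d:ℝ) with htdef
  set L := Real.logb 2 ((k:ℝ)+1) with hLdef
  set E := 24*((k:ℝ)+1)^(m+1)*(m:ℝ)*Real.logb 2 (m:ℝ) with hEdef
  have hL1 : (1:ℝ) ≤ L := by
    have hkk : (1:ℝ) ≤ (k:ℝ) := by exact_mod_cast hk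
    have h := Real.logb_le_logb_of_le one_lt_two two_pos
      (show (2:ℝ) ≤ (k:ℝ)+1 by linarith)
    rwa [Real.logb_self_eq_one one_lt_two] at h
  have hm1' : (1:ℝ) ≤ (m:ℝ) := by exact_mod_cast hm1
  have h16L : (0:ℝ) < 16 * L := by linarith
  have hmL : (m:ℝ) * (16 * L) ≤ (t:ℝ) := (le_div_iff₀ h16L).mp hm2
  have hmlL : (m:ℝ) * L ≤ (t:ℝ)/16 := by linarith
  have hLle : L ≤ (t:ℝ)/16 := by nlinarith
  have hmle : (m:ℝ) ≤ (t:ℝ)/16 := by nlinarith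
  have ht16 : (16:ℝ) ≤ (t:ℝ) := by nlinarith
  have h16m : 16 * m ≤ t := by
    have h : ((16 * m : ℕ):ℝ) ≤ (t:ℝ) := by push_cast; linarith
    exact_mod_cast h
  have ht16n : 16 ≤ t := by omega
  set N := t / 2 with hNdef
  have hN8 : 8 ≤ N := by omega
  have hmt : m + 2 ≤ t := by omega
  set p := t - m - 2 with hpdef
  have hpN : N + 2 ≤ p := by omega
  -- lower bound on logIter (m+1) d via the tower
  have hX : tw p < logIter (m+1) (d:ℝ) := by
    apply tw_lt_of_logIter
    intro j hj
    rw [← logIter_add]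
    exact one_lt_logIter_of_lt_logStar (show j + (m+1) < t by omega)
  -- bound on E
  have hk1 : (0:ℝ) < (k:ℝ)+1 := by positivity
  have hkL : ((k:ℝ)+1) = (2:ℝ) ^ L := (Real.rpow_logb two_pos (by norm_num) hk1).symm
  have hpow : ((k:ℝ)+1)^(m+1) = (2:ℝ) ^ (L * ((m:ℝ)+1)) := by
    rw [hkL, ← Real.rpow_natCast ((2:ℝ)^L) (m+1), ← Real.rpow_mul (le_of_lt two_pos)]
    push_cast
    ring_nf
  have hm2pow : (m:ℝ) ≤ (2:ℝ) ^ ((m:ℝ)) := by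
    have := bern hm1'; linarith
  have hlogm : Real.logb 2 (m:ℝ) ≤ (2:ℝ) ^ ((m:ℝ)) := by
    have h0 : (0:ℝ) < (m:ℝ) := by linarith
    have : Real.logb 2 (m:ℝ) ≤ (m:ℝ) :=
      (Real.logb_le_iff_le_rpow one_lt_two h0).mpr hm2pow
    linarith
  have h24 : (24:ℝ) ≤ (2:ℝ) ^ (5:ℝ) := by
    rw [show (5:ℝ) = ((5:ℕ):ℝ) by norm_num, Real.rpow_natCast]
    norm_num
  have hlogm0 : 0 ≤ Real.logb 2 (m:ℝ) := Real.logb_nonneg one_lt_two hm1'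
  have hEb : E ≤ (2:ℝ) ^ ((5:ℝ) + (t:ℝ)/4) := by
    rw [hEdef, hpow]
    have step : 24 * (2:ℝ)^(L*((m:ℝ)+1)) * (m:ℝ) * Real.logb 2 (m:ℝ) ≤
        (2:ℝ)^(5:ℝ) * (2:ℝ)^(L*((m:ℝ)+1)) * (2:ℝ)^((m:ℝ)) * (2:ℝ)^((m:ℝ)) := by
      have p1 : (0:ℝ) ≤ (2:ℝ)^(L*((m:ℝ)+1)) := (Real.rpow_pos_of_pos two_pos _).le
      have p2 : (0:ℝ) ≤ (2:ℝ)^(5:ℝ) := (Real.rpow_pos_of_pos two_pos _).le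
      have l1 : (24:ℝ) * (2:ℝ)^(L*((m:ℝ)+1)) ≤ (2:ℝ)^(5:ℝ) * (2:ℝ)^(L*((m:ℝ)+1)) :=
        mul_le_mul h24 le_rfl p1 p2
      have l2 : (24:ℝ) * (2:ℝ)^(L*((m:ℝ)+1)) * (m:ℝ) ≤
          (2:ℝ)^(5:ℝ) * (2:ℝ)^(L*((m:ℝ)+1)) * (2:ℝ)^((m:ℝ)) :=
        mul_le_mul l1 hm2pow (Nat.cast_nonneg m) (by positivity)
      exact mul_le_mul l2 hlogm hlogm0 (by positivity)
    calc 24 * (2:ℝ)^(L*((m:ℝ)+1)) * (m:ℝ) * Real.logb 2 (m:ℝ) ≤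
        (2:ℝ)^(5:ℝ) * (2:ℝ)^(L*((m:ℝ)+1)) * (2:ℝ)^((m:ℝ)) * (2:ℝ)^((m:ℝ)) := step
    _ = (2:ℝ)^((5:ℝ) + L*((m:ℝ)+1) + (m:ℝ) + (m:ℝ)) := by
        rw [← Real.rpow_add two_pos, ← Real.rpow_add two_pos, ← Real.rpow_add two_pos]
    _ ≤ (2:ℝ)^((5:ℝ) + (t:ℝ)/4) := by
        apply Real.rpow_le_rpow_of_exponent_le one_le_two
        have : L*((m:ℝ)+1) = (m:ℝ)*L + L := by ring
        linarith
  -- numeric: 5 + t/4 ≤ tw (N-1)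
  have htwN : tw N = (2:ℝ) ^ tw (N-1) := by
    have h := tw_succ (N-1)
    rwa [show N-1+1 = N by omega] at h
  have htwN1 : tw (N-1) = (2:ℝ) ^ tw (N-2) := by
    have h := tw_succ (N-2)
    rwa [show N-2+1 = N-1 by omega] at h
  have h5 : (5:ℝ) + (t:ℝ)/4 ≤ tw (N-1) := by
    have hcast : ((N:ℝ)) - 2 ≤ tw (N-2) := by
      have h := nat_le_tw (N-2)
      have h2N : (2:ℕ) ≤ N := by omega
      rw [Nat.cast_sub h2N] at h
      push_cast at h
      linarith
    have h6 : (2:ℝ) ≤ tw (N-2) := by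
      have : (8:ℝ) ≤ (N:ℝ) := by exact_mod_cast hN8
      linarith
    have hmul := two_mul_le_rpow h6
    have hNt : (t:ℝ) ≤ 2*(N:ℝ) + 1 := by
      have : t ≤ 2*N+1 := by omega
      exact_mod_cast this
    have hN8' : (8:ℝ) ≤ (N:ℝ) := by exact_mod_cast hN8
    rw [htwN1]
    linarith
  have hEtw : E ≤ tw N := by
    have := Real.rpow_le_rpow_of_exponent_le one_le_two h5
    rw [← htwN] at this
    linarith
  -- key inequality: tw N * 2^E ≤ tw p
  have key : tw N * (2:ℝ)^E ≤ tw p := by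
    have e1 : (2:ℝ)^E ≤ (2:ℝ)^(tw N) := Real.rpow_le_rpow_of_exponent_le one_le_two hEtw
    have e2 : tw N * (2:ℝ)^E ≤ tw N * (2:ℝ)^(tw N) :=
      mul_le_mul_of_nonneg_left e1 (tw_pos N).le
    have e3 : tw N * (2:ℝ)^(tw N) = (2:ℝ)^(tw (N-1) + tw N) := by
      rw [Real.rpow_add two_pos, htwN]
    have e4 : tw (N-1) + tw N ≤ (2:ℝ)^(tw N) := by
      have q1 := two_mul_le_rpow (two_le_tw (show 1 ≤ N by omega))
      have q2 := tw_mono (show N-1 ≤ N by omega)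
      linarith
    have e5 : (2:ℝ)^(tw (N-1) + tw N) ≤ (2:ℝ)^((2:ℝ)^(tw N)) :=
      Real.rpow_le_rpow_of_exponent_le one_le_two e4
    have e6 : (2:ℝ)^((2:ℝ)^(tw N)) = tw (N+2) := by rw [← tw_succ, ← tw_succ]
    have e7 : tw (N+2) ≤ tw p := tw_mono hpN
    linarith
  have hErpos : (0:ℝ) < (2:ℝ)^E := Real.rpow_pos_of_pos two_pos E
  have hA : tw N ≤ logIter (m+1) (d:ℝ) / (2:ℝ)^E := by
    rw [le_div_iff₀ hErpos]
    exact le_trans key (le_of_lt hX)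
  have h1A : 1 < logIter (m+1) (d:ℝ) / (2:ℝ)^E := by
    have : (2:ℝ) ≤ tw N := two_le_tw (by omega)
    linarith
  exact le_logStar h1A hA

end Stmt19
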